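/- Let G be a finite group, S ∈ Syl_p(G), and let P ≤ R ≤ S with C_G(P) of characteristic p. Then C_G(R) is of characteristic p. Consequently, the set Δ = {P ≤ S : N_G(P) is of characteristic p} is closed under passing to overgroups in S and under G-conjugation. -/

import Mathlib

variable (p : ℕ) (G : Type*) [Group G]

/-- `O_p(G)`: the join of all normal `p`-subgroups of `G` (the largest normal `p`-subgroup
when `G` is finite). -/
def pCore : Subgroup G :=
  ⨆ H : {H : Subgroup G // H.Normal ∧ IsPGroup p H}, H.1

/-- `O_{p'}(G)`: the join of all normal subgroups of order coprime to `p` (the largest normal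
`p'`-subgroup when `G` is finite). -/
def pPrimeCore : Subgroup G :=
  ⨆ H : {H : Subgroup G // H.Normal ∧ Nat.Coprime (Nat.card H) p}, H.1

lemma iSup_normal {G : Type*} [Group G] {ι : Sort*} (H : ι → Subgroup G)
    (h : ∀ i, (H i).Normal) : (⨆ i, H i).Normal := by
  constructor
  intro n hn g
  refine Subgroup.iSup_induction (C := fun x => g * x * g⁻¹ ∈ ⨆ i, H i) H hn
    (fun i x hx => ?_) ?_ (fun x y hx hy => ?_)
  · exact Subgroup.mem_iSup_of_mem i ((h i).conj_mem x hx g)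
  · simpa using Subgroup.one_mem (⨆ i, H i)
  · have e : g * (x * y) * g⁻¹ = (g * x * g⁻¹) * (g * y * g⁻¹) := by group
    show g * (x * y) * g⁻¹ ∈ ⨆ i, H i
    rw [e]; exact mul_mem hx hy

instance pCore_normal : (pCore p G).Normal := iSup_normal _ (fun i => i.2.1)

instance pPrimeCore_normal : (pPrimeCore p G).Normal := iSup_normal _ (fun i => i.2.1)

/-- A group `G` is of characteristic `p` if `C_G(O_p(G)) ≤ O_p(G)`. -/
def IsCharP : Prop :=
  Subgroup.centralizer ((pCore p G : Subgroup G) : Set G) ≤ pCore p G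

/-- A group `G` is almost of characteristic `p` if `G/O_{p'}(G)` is of characteristic `p`. -/
def IsAlmostCharP : Prop := IsCharP p (G ⧸ pPrimeCore p G)
namespace CharPAux

open Subgroup

variable {p : ℕ} {G : Type*} [Group G]

lemma normal_sup {H K : Subgroup G} (hH : H.Normal) (hK : K.Normal) : (H ⊔ K).Normal := by
  have := iSup_normal (fun b : Bool => bif b then H else K)
    (by rintro (_ | _) <;> simpa)
  rwa [iSup_bool_eq] at this

lemma le_pCore {H : Subgroup G} (hn : H.Normal) (hp : IsPGroup p H) : H ≤ pCore p G :=
  le_iSup (fun i : {H : Subgroup G // H.Normal ∧ IsPGroup p H} => i.1) ⟨H, hn, hp⟩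

lemma isPGroup_iff {H : Subgroup G} : IsPGroup p H ↔ ∀ g ∈ H, ∃ k : ℕ, g ^ p ^ k = 1 := by
  constructor
  · intro h g hg
    obtain ⟨k, hk⟩ := h ⟨g, hg⟩
    exact ⟨k, by simpa [Subtype.ext_iff] using hk⟩
  · intro h g
    obtain ⟨k, hk⟩ := h g g.2
    exact ⟨k, by simpa [Subtype.ext_iff] using hk⟩

lemma pCore_isPGroup : IsPGroup p (pCore p G) := by
  rw [isPGroup_iff]
  intro g hg
  have hdir : Directed (· ≤ ·)
      (fun i : {H : Subgroup G // H.Normal ∧ IsPGroup p H} => i.1) := by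
    rintro ⟨A, hAn, hAp⟩ ⟨B, hBn, hBp⟩
    refine ⟨⟨A ⊔ B, normal_sup hAn hBn, ?_⟩, le_sup_left, le_sup_right⟩
    haveI := hBn
    exact IsPGroup.to_sup_of_normal_right hAp hBp
  haveI : Nonempty {H : Subgroup G // H.Normal ∧ IsPGroup p H} :=
    ⟨⟨⊥, inferInstance, IsPGroup.of_bot⟩⟩
  obtain ⟨⟨H, hn, hp'⟩, hgH⟩ := (Subgroup.mem_iSup_of_directed hdir).mp hg
  exact isPGroup_iff.mp hp' g hgH

end CharPAux
namespace CharPAux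

variable {p : ℕ} {G : Type*} [Group G]
open Subgroup

/-- The ambient version of `pCore` of a subgroup. -/
def ambCore (p : ℕ) (K : Subgroup G) : Subgroup G := map K.subtype (pCore p K)

lemma ambCore_le (K : Subgroup G) : ambCore p K ≤ K := map_subtype_le _

lemma ambCore_isPGroup (K : Subgroup G) : IsPGroup p (ambCore p K) :=
  pCore_isPGroup.map _

lemma le_normalizer_ambCore (K : Subgroup G) : K ≤ (Subgroup.normalizer ((ambCore p K) : Set G)) := by
  intro k hk
  rw [mem_normalizer_iff]
  intro h
  constructor
  · rintro ⟨y, hy, rfl⟩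
    exact ⟨⟨k, hk⟩ * y * ⟨k, hk⟩⁻¹, (pCore_normal p K).conj_mem y hy ⟨k, hk⟩, rfl⟩
  · rintro ⟨y, hy, hyeq⟩
    have hy2 := (pCore_normal p K).conj_mem y hy ⟨k, hk⟩⁻¹
    refine ⟨⟨k, hk⟩⁻¹ * y * (⟨k, hk⟩⁻¹)⁻¹, hy2, ?_⟩
    have : (y : G) = k * h * k⁻¹ := hyeq
    simp [this]
    group

lemma le_ambCore {K T : Subgroup G} (h1 : T ≤ K) (h2 : IsPGroup p T)
    (h3 : K ≤ (Subgroup.normalizer (T : Set G))) : T ≤ ambCore p K := by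
  have hN : (T.subgroupOf K).Normal := by
    constructor
    rintro ⟨n, hnK⟩ hn ⟨g, hgK⟩
    rw [mem_subgroupOf] at hn ⊢
    exact (mem_normalizer_iff.mp (h3 hgK) n).mp hn
  have hP : IsPGroup p (T.subgroupOf K) := by
    rw [isPGroup_iff]
    intro g hg
    rw [mem_subgroupOf] at hg
    obtain ⟨k, hk⟩ := isPGroup_iff.mp h2 (g : G) hg
    exact ⟨k, by simpa [Subtype.ext_iff] using hk⟩
  calc T = (T.subgroupOf K).map K.subtype := by
        rw [subgroupOf_map_subtype, inf_eq_left.mpr h1]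
    _ ≤ ambCore p K := map_mono (le_pCore hN hP)

lemma map_subtype_centralizer (K : Subgroup G) (X : Subgroup K) :
    map K.subtype (Subgroup.centralizer (X : Set K)) =
      Subgroup.centralizer ((map K.subtype X : Subgroup G) : Set G) ⊓ K := by
  ext g
  simp only [mem_map, mem_inf, Subgroup.mem_centralizer_iff]
  constructor
  · rintro ⟨y, hy, rfl⟩
    refine ⟨?_, y.2⟩
    rintro h ⟨z, hz, rfl⟩
    exact congrArg Subtype.val (hy z hz)
  · rintro ⟨hc, hgK⟩
    exact ⟨⟨g, hgK⟩, fun z hz => Subtype.ext (hc (z : G) ⟨z, hz, rfl⟩), rfl⟩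

/-- Ambient formulation of characteristic `p` for a subgroup. -/
def AmbCharP (p : ℕ) (K : Subgroup G) : Prop :=
  Subgroup.centralizer ((ambCore p K : Subgroup G) : Set G) ⊓ K ≤ ambCore p K

lemma ambCharP_iff (K : Subgroup G) : IsCharP p K ↔ AmbCharP p K := by
  unfold IsCharP AmbCharP
  rw [← map_le_map_iff_of_injective K.subtype_injective, map_subtype_centralizer]
  rfl

end CharPAux
namespace CharPAux

variable {p : ℕ} {G : Type*} [Group G]
open Subgroup

/-- Conjugation as `map`. -/
abbrev cmap (g : G) (H : Subgroup G) : Subgroup G := map (MulAut.conj g).toMonoidHom H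

lemma mem_cmap {g x : G} {H : Subgroup G} : x ∈ cmap g H ↔ g⁻¹ * x * g ∈ H := by
  simp only [mem_map, MulEquiv.coe_toMonoidHom, MulAut.conj_apply]
  constructor
  · rintro ⟨y, hy, rfl⟩
    rwa [show g⁻¹ * (g * y * g⁻¹) * g = y by group]
  · intro h; exact ⟨g⁻¹ * x * g, h, by group⟩

lemma cmap_cmap_inv (g : G) (H : Subgroup G) : cmap g⁻¹ (cmap g H) = H := by
  ext x
  rw [mem_cmap, mem_cmap, show g⁻¹ * (g⁻¹⁻¹ * x * g⁻¹) * g = x by group]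

lemma cmap_cmap_inv' (g : G) (H : Subgroup G) : cmap g (cmap g⁻¹ H) = H := by
  have := cmap_cmap_inv g⁻¹ H; rwa [inv_inv] at this

lemma cmap_self_of_mem {g : G} {K : Subgroup G} (hg : g ∈ K) : cmap g K = K := by
  ext x
  rw [mem_cmap]
  constructor
  · intro h
    have := mul_mem (mul_mem hg h) (inv_mem hg)
    rwa [show g * (g⁻¹ * x * g) * g⁻¹ = x by group] at this
  · intro h
    exact mul_mem (mul_mem (inv_mem hg) h) hg

lemma cmap_of_mem_normalizer {g : G} {H : Subgroup G} (hg : g ∈ (Subgroup.normalizer (H : Set G))) :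
    cmap g H = H := by
  ext x
  rw [mem_cmap]
  rw [mem_normalizer_iff] at hg
  have := hg (g⁻¹ * x * g)
  rw [show g * (g⁻¹ * x * g) * g⁻¹ = x by group] at this
  exact this

lemma mem_normalizer_of_cmap {g : G} {H : Subgroup G} (hg : cmap g H = H) :
    g ∈ (Subgroup.normalizer (H : Set G)) := by
  rw [mem_normalizer_iff]
  intro h
  constructor
  · intro hh
    rw [← hg]
    exact mem_cmap.mpr (by rwa [show g⁻¹ * (g * h * g⁻¹) * g = h by group])
  · intro hh
    rw [← hg] at hh
    have := mem_cmap.mp hh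
    rwa [show g⁻¹ * (g * h * g⁻¹) * g = h by group] at this

lemma cmap_normalizer (g : G) (H : Subgroup G) :
    cmap g (Subgroup.normalizer (H : Set G)) = (Subgroup.normalizer ((cmap g H) : Set G)) :=
  map_equiv_normalizer_eq H (MulAut.conj g)

lemma cmap_centralizer (g : G) (H : Subgroup G) :
    cmap g (Subgroup.centralizer (H : Set G)) =
      Subgroup.centralizer ((cmap g H : Subgroup G) : Set G) := by
  ext x
  rw [mem_cmap]
  simp only [Subgroup.mem_centralizer_iff, SetLike.mem_coe]
  constructor
  · intro h y hy
    rw [mem_cmap] at hy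
    have := h _ hy
    calc y * x = g * ((g⁻¹*y*g) * (g⁻¹*x*g)) * g⁻¹ := by group
      _ = g * ((g⁻¹*x*g) * (g⁻¹*y*g)) * g⁻¹ := by rw [this]
      _ = x * y := by group
  · intro h y hy
    have hy' : g * y * g⁻¹ ∈ cmap g H :=
      mem_cmap.mpr (by rwa [show g⁻¹*(g*y*g⁻¹)*g = y by group])
    have := h _ hy'
    calc y * (g⁻¹*x*g) = g⁻¹ * ((g*y*g⁻¹) * x) * g := by group
      _ = g⁻¹ * (x * (g*y*g⁻¹)) * g := by rw [this]
      _ = (g⁻¹*x*g) * y := by group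

lemma ambCore_cmap {K : Subgroup G} {g : G} (hg : cmap g K = K) :
    cmap g (ambCore p K) = ambCore p K := by
  have key : ∀ h : G, cmap h K = K → cmap h (ambCore p K) ≤ ambCore p K := by
    intro h hh
    refine le_ambCore ?_ ((ambCore_isPGroup K).map _) ?_
    · calc cmap h (ambCore p K) ≤ cmap h K := map_mono (ambCore_le K)
        _ = K := hh
    · rw [← cmap_normalizer]
      calc K = cmap h K := hh.symm
        _ ≤ cmap h (Subgroup.normalizer ((ambCore p K) : Set G)) := map_mono (le_normalizer_ambCore K)
  have h1 := key g hg
  have hg' : cmap g⁻¹ K = K := by conv_lhs => rw [← hg, cmap_cmap_inv]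
  have h2 := key g⁻¹ hg'
  have h3 : ambCore p K ≤ cmap g (ambCore p K) := by
    have := map_mono (f := (MulAut.conj g).toMonoidHom) h2
    exact le_trans (le_of_eq (cmap_cmap_inv' g (ambCore p K)).symm) this
  exact le_antisymm h1 h3

end CharPAux
namespace CharPAux

variable {p : ℕ} {G : Type*} [Group G]
open Subgroup

lemma pCore_map_le {G' : Type*} [Group G'] (f : G ≃* G') :
    map f.toMonoidHom (pCore p G) ≤ pCore p G' :=
  le_pCore ((pCore_normal p G).map _ f.surjective) (pCore_isPGroup.map _)

lemma pCore_map {G' : Type*} [Group G'] (e : G ≃* G') :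
    map e.toMonoidHom (pCore p G) = pCore p G' := by
  refine le_antisymm (pCore_map_le e) ?_
  have := map_mono (f := e.toMonoidHom) (pCore_map_le (p := p) e.symm)
  rw [map_map] at this
  rw [show e.toMonoidHom.comp e.symm.toMonoidHom = MonoidHom.id G' by
    ext x; simp] at this
  rwa [map_id] at this

lemma isCharP_of_mulEquiv {G' : Type*} [Group G'] (e : G ≃* G') (h : IsCharP p G) :
    IsCharP p G' := by
  intro x hx
  rw [← pCore_map e]
  have hmem : e.symm x ∈ Subgroup.centralizer ((pCore p G : Subgroup G) : Set G) := by
    rw [Subgroup.mem_centralizer_iff]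
    intro y hy
    have hy' : y ∈ pCore p G := hy
    have hyc : e y ∈ pCore p G' := by
      rw [← pCore_map (p := p) e]
      exact mem_map_of_mem _ hy'
    have hc := Subgroup.mem_centralizer_iff.mp hx (e y) hyc
    apply e.injective
    rw [map_mul, map_mul]
    simpa using hc
  have := mem_map_of_mem e.toMonoidHom (h hmem)
  simpa using this

end CharPAux
namespace CharPAux

variable {p : ℕ} {G : Type*} [Group G]
open Subgroup

/-- Decomposition of an element into commuting `p`-part and `p'`-part, both powers of `x`. -/
lemma exists_pparts [Finite G] (hp : p.Prime) (x : G) :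
    ∃ y z : G, x = y * z ∧ y ∈ zpowers x ∧ z ∈ zpowers x ∧
      (∃ k : ℕ, y ^ p ^ k = 1) ∧ Nat.Coprime (orderOf z) p := by
  have hx : orderOf x ≠ 0 := (orderOf_pos x).ne'
  set n := orderOf x with hn
  set k := n.factorization p with hk
  set m := n / p ^ k with hm
  have hnm : p ^ k * m = n := Nat.ordProj_mul_ordCompl_eq_self n p
  have hpm : ¬ p ∣ m := Nat.not_dvd_ordCompl hp hx
  have hcop : Nat.Coprime (p ^ k) m := Nat.Coprime.pow_left k
    ((Nat.Prime.coprime_iff_not_dvd hp).mpr hpm)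
  obtain ⟨a, b, hab⟩ : ∃ a b : ℤ, (p : ℤ) ^ k * a + (m : ℤ) * b = 1 := by
    refine ⟨Nat.gcdA (p ^ k) m, Nat.gcdB (p ^ k) m, ?_⟩
    have h := Nat.gcd_eq_gcd_ab (p ^ k) m
    rw [Nat.Coprime.gcd_eq_one hcop] at h
    push_cast at h ⊢
    linarith [h]
  refine ⟨x ^ ((m : ℤ) * b), x ^ ((p : ℤ) ^ k * a), ?_, zpow_mem (mem_zpowers x) _,
    zpow_mem (mem_zpowers x) _, ⟨k, ?_⟩, ?_⟩
  · rw [← zpow_add, ← zpow_one x]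
    congr 1
    rw [zpow_one]
    linarith [hab]
  · rw [← zpow_natCast, ← zpow_mul]
    have he : (m : ℤ) * b * (p ^ k : ℕ) = (n : ℤ) * b := by
      push_cast
      rw [← hnm]
      push_cast
      ring
    rw [he, zpow_mul, zpow_natCast, hn, pow_orderOf_eq_one, one_zpow]
  · have hzm : (x ^ ((p : ℤ) ^ k * a)) ^ m = 1 := by
      rw [← zpow_natCast, ← zpow_mul]
      have he : (p : ℤ) ^ k * a * m = (n : ℤ) * a := by
        rw [← hnm]
        push_cast
        ring
      rw [he, zpow_mul, zpow_natCast, hn, pow_orderOf_eq_one, one_zpow]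
    have hdvd : orderOf (x ^ ((p : ℤ) ^ k * a)) ∣ m := orderOf_dvd_of_pow_eq_one hzm
    exact Nat.Coprime.coprime_dvd_left hdvd
      (Nat.coprime_comm.mp ((Nat.Prime.coprime_iff_not_dvd hp).mpr hpm))

open scoped commutatorElement in
/-- Thompson's A×B lemma, in the special case needed here. -/
lemma abLemma [Finite G] [Fact p.Prime] {T R : Subgroup G} (hT : IsPGroup p T)
    (hR : IsPGroup p R) (hRT : R ≤ (Subgroup.normalizer (T : Set G))) {x : G} (hxT : x ∈ (Subgroup.normalizer (T : Set G)))
    (hxR : x ∈ Subgroup.centralizer (R : Set G))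
    (hxC : x ∈ Subgroup.centralizer ((T ⊓ Subgroup.centralizer (R : Set G) : Subgroup G) : Set G))
    (hord : Nat.Coprime (orderOf x) p) : x ∈ Subgroup.centralizer (T : Set G) := by
  set K0 : Subgroup G := T ⊔ R with hK0def
  have hK0 : IsPGroup p K0 := IsPGroup.to_sup_of_normal_left' hT hR hRT
  have hNil : Group.IsNilpotent K0 := hK0.isNilpotent
  obtain ⟨n, hn⟩ := _root_.nilpotent_iff_lowerCentralSeries.mp hNil
  set D : ℕ → Subgroup G := fun j => (fun X => ⁅X, R⁆)^[j] T with hD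
  have hD0 : D 0 = T := rfl
  have hDsucc : ∀ j, D (j + 1) = ⁅D j, R⁆ := by
    intro j
    simp only [hD, Function.iterate_succ_apply']
  have hDT : ∀ j, D j ≤ T := by
    intro j
    induction j with
    | zero => exact le_rfl
    | succ j ih =>
      rw [hDsucc, commutator_le]
      intro g1 hg1 g2 hg2
      rw [commutatorElement_def]
      have h1 : g1 ∈ T := ih hg1
      have h2 : g2 * g1⁻¹ * g2⁻¹ ∈ T := (mem_normalizer_iff.mp (hRT hg2) g1⁻¹).mp (inv_mem h1)
      have h3 := mul_mem h1 h2
      rwa [show g1 * (g2 * g1⁻¹ * g2⁻¹) = g1 * g2 * g1⁻¹ * g2⁻¹ by group] at h3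
  have hDL : ∀ j, D j ≤ map K0.subtype (Subgroup.lowerCentralSeries (⊤ : Subgroup K0) j) := by
    intro j
    induction j with
    | zero =>
      rw [hD0]
      have htop : map K0.subtype (⊤ : Subgroup K0) = K0 := by
        rw [← MonoidHom.range_eq_map, subtype_range]
      rw [show Subgroup.lowerCentralSeries (⊤ : Subgroup K0) 0 = ⊤ from rfl, htop]
      exact le_sup_left
    | succ j ih =>
      rw [hDsucc]
      have hlcs : Subgroup.lowerCentralSeries (⊤ : Subgroup K0) (j+1) = ⁅Subgroup.lowerCentralSeries (⊤ : Subgroup K0) j, ⊤⁆ := rfl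
      rw [hlcs, map_commutator]
      refine commutator_mono ih ?_
      rw [← MonoidHom.range_eq_map, subtype_range]
      exact le_sup_right
  have hDn : D n = ⊥ := by
    have h := hDL n
    rw [hn, Subgroup.map_bot] at h
    exact le_bot_iff.mp h
  have step : ∀ j, (∀ u ∈ D (j+1), x * u * x⁻¹ = u) → ∀ t ∈ D j, x * t * x⁻¹ = t := by
    intro j ih t ht
    set w : G := t⁻¹ * (x * t * x⁻¹) with hw
    have hwT : w ∈ T := mul_mem (inv_mem (hDT j ht))
      ((mem_normalizer_iff.mp hxT t).mp (hDT j ht))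
    have hXR : ⁅zpowers x, R⁆ = ⊥ := by
      rw [commutator_eq_bot_iff_le_centralizer, zpowers_le]
      exact hxR
    have h1 : ⁅⁅zpowers x, R⁆, D j⁆ = ⊥ := by rw [hXR, commutator_bot_left]
    have h2 : ⁅⁅R, D j⁆, zpowers x⁆ = ⊥ := by
      rw [commutator_comm R (D j), ← hDsucc j, commutator_eq_bot_iff_le_centralizer]
      intro u hu
      rw [Subgroup.mem_centralizer_iff]
      intro h hh
      rw [SetLike.mem_coe, mem_zpowers_iff] at hh
      obtain ⟨i, rfl⟩ := hh
      have hcx : Commute x u := by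
        have he := ih u hu
        rw [Commute, SemiconjBy]
        calc x * u = (x * u * x⁻¹) * x := by group
          _ = u * x := by rw [he]
      exact (hcx.zpow_left i).eq
    have h3 : ⁅⁅D j, zpowers x⁆, R⁆ = ⊥ :=
      commutator_commutator_eq_bot_of_rotate h1 h2
    have hwR : w ∈ Subgroup.centralizer (R : Set G) := by
      rw [Subgroup.mem_centralizer_iff]
      intro r hr
      have hwmem : w ∈ ⁅D j, zpowers x⁆ := by
        have he : w = ⁅t⁻¹, x⁆ := by rw [hw, commutatorElement_def]; group
        rw [he]
        exact commutator_mem_commutator (inv_mem ht) (mem_zpowers x)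
      have hb : ⁅w, r⁆ ∈ (⊥ : Subgroup G) := h3 ▸ commutator_mem_commutator hwmem hr
      rw [Subgroup.mem_bot, commutatorElement_eq_one_iff_commute] at hb
      exact hb.symm.eq
    have hxw : Commute x w := by
      have := Subgroup.mem_centralizer_iff.mp hxC w ⟨hwT, hwR⟩
      rw [Commute, SemiconjBy, this]
    have htw : x * t * x⁻¹ = t * w := by rw [hw]; group
    have hit : ∀ i : ℕ, x ^ i * t * (x ^ i)⁻¹ = t * w ^ i := by
      intro i
      induction i with
      | zero => simp
      | succ i ih2 =>
        have hxwi : x * w ^ i * x⁻¹ = w ^ i := by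
          have := (hxw.pow_right i).eq
          rw [this]
          group
        calc x ^ (i+1) * t * (x ^ (i+1))⁻¹
            = x * (x ^ i * t * (x ^ i)⁻¹) * x⁻¹ := by rw [pow_succ']; group
          _ = x * (t * w ^ i) * x⁻¹ := by rw [ih2]
          _ = (x * t * x⁻¹) * (x * w ^ i * x⁻¹) := by group
          _ = (t * w) * w ^ i := by rw [htw, hxwi]
          _ = t * w ^ (i+1) := by rw [pow_succ']; group
    have hwm : w ^ orderOf x = 1 := by
      have h := hit (orderOf x)
      rw [pow_orderOf_eq_one] at h
      simp only [one_mul, inv_one, mul_one] at h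
      have h2 : t * 1 = t * w ^ orderOf x := by rw [mul_one]; exact h
      exact (mul_left_cancel h2).symm
    have hd1 : orderOf w ∣ orderOf x := orderOf_dvd_of_pow_eq_one hwm
    obtain ⟨k, hk⟩ := isPGroup_iff.mp hT w hwT
    have hd2 : orderOf w ∣ p ^ k := orderOf_dvd_of_pow_eq_one hk
    have hcop : Nat.Coprime (orderOf x) (p ^ k) := hord.pow_right k
    have hg : orderOf w ∣ Nat.gcd (orderOf x) (p ^ k) := Nat.dvd_gcd hd1 hd2
    rw [Nat.Coprime] at hcop
    rw [hcop] at hg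
    have hw1 : orderOf w = 1 := Nat.dvd_one.mp hg
    rw [orderOf_eq_one_iff] at hw1
    rw [htw, hw1, mul_one]
  have key : ∀ i, ∀ t ∈ D (n - i), x * t * x⁻¹ = t := by
    intro i
    induction i with
    | zero =>
      intro t ht
      rw [Nat.sub_zero, hDn, mem_bot] at ht
      rw [ht]; group
    | succ i ih =>
      by_cases hcase : n ≤ i
      · have he : n - (i+1) = n - i := by omega
        rw [he]
        exact ih
      · have he : n - i = (n - (i+1)) + 1 := by omega
        refine step (n - (i+1)) ?_
        rw [← he]
        exact ih
  have hfin := key n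
  rw [Nat.sub_self, hD0] at hfin
  rw [Subgroup.mem_centralizer_iff]
  intro h hh
  have hxh := hfin h hh
  have hcomm : x * h = h * x := by
    calc x * h = (x * h * x⁻¹) * x := by group
      _ = h * x := by rw [hxh]
  exact hcomm.symm

end CharPAux
namespace CharPAux

variable {p : ℕ} {G : Type*} [Group G]
open Subgroup

lemma cmap_inf (g : G) (A B : Subgroup G) : cmap g (A ⊓ B) = cmap g A ⊓ cmap g B :=
  map_inf A B _ (MulAut.conj g).injective

lemma cmap_of_mem_centralizer {c : G} {R : Subgroup G}
    (hc : c ∈ Subgroup.centralizer (R : Set G)) : cmap c R = R := by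
  rw [Subgroup.mem_centralizer_iff] at hc
  ext x
  rw [mem_cmap]
  constructor
  · intro h
    have e : x = c * (c⁻¹ * x * c) * c⁻¹ := by group
    rw [← hc _ h] at e
    rw [show c⁻¹ * x * c * c * c⁻¹ = c⁻¹ * x * c by group] at e
    rw [e]
    exact h
  · intro h
    have hxc := hc _ h
    have e : c⁻¹ * x * c = x := by rw [mul_assoc, hxc]; group
    rw [e]
    exact h

lemma centralizer_le_normalizer' (R : Subgroup G) :
    Subgroup.centralizer (R : Set G) ≤ (Subgroup.normalizer (R : Set G)) := fun _ hc =>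
  mem_normalizer_of_cmap (cmap_of_mem_centralizer hc)

lemma isPGroup_centralizer_anti {A B : Subgroup G} (h : A ≤ B) :
    Subgroup.centralizer (B : Set G) ≤ Subgroup.centralizer (A : Set G) :=
  Subgroup.centralizer_le (by exact_mod_cast h)

lemma mem_sup_normalizer {H R : Subgroup G} (hR : R ≤ (Subgroup.normalizer (H : Set G))) {k : G}
    (hk : k ∈ H ⊔ R) : ∃ h ∈ H, ∃ r ∈ R, k = h * r := by
  let E : Subgroup G :=
    { carrier := {x | ∃ h ∈ H, ∃ r ∈ R, x = h * r}
      one_mem' := ⟨1, one_mem _, 1, one_mem _, by simp⟩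
      mul_mem' := by
        rintro a b ⟨h1, hh1, r1, hr1, rfl⟩ ⟨h2, hh2, r2, hr2, rfl⟩
        refine ⟨h1 * (r1 * h2 * r1⁻¹), ?_, r1 * r2, mul_mem hr1 hr2, by group⟩
        exact mul_mem hh1 ((mem_normalizer_iff.mp (hR hr1) h2).mp hh2)
      inv_mem' := by
        rintro a ⟨h, hh, r, hr, rfl⟩
        refine ⟨r⁻¹ * h⁻¹ * r, ?_, r⁻¹, inv_mem hr, by group⟩
        exact (by simpa using (mem_normalizer_iff.mp (hR (inv_mem hr)) h⁻¹).mp (inv_mem hh)) }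
  have hle : H ⊔ R ≤ E := sup_le
    (fun h hh => ⟨h, hh, 1, one_mem _, by simp⟩)
    (fun r hr => ⟨1, one_mem _, r, hr, by simp⟩)
  exact hle hk

lemma pow_decomp_of_normalizer {H : Subgroup G} {h r : G} (hh : h ∈ H)
    (hr : r ∈ (Subgroup.normalizer (H : Set G))) (n : ℕ) : ∃ h' ∈ H, (h * r) ^ n = h' * r ^ n := by
  induction n with
  | zero => exact ⟨1, one_mem _, by simp⟩
  | succ n ih =>
    obtain ⟨h', hh', he⟩ := ih
    refine ⟨h' * (r ^ n * h * (r ^ n)⁻¹), mul_mem hh'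
      ((mem_normalizer_iff.mp (pow_mem hr n) h).mp hh), ?_⟩
    rw [pow_succ, he, pow_succ]
    group

lemma le_ambCore_of_cmap {C D : Subgroup G} (hD : D ≤ C) (hp : IsPGroup p D)
    (hnorm : ∀ c ∈ C, cmap c D = D) : D ≤ ambCore p C :=
  le_ambCore hD hp (fun c hc => mem_normalizer_of_cmap (hnorm c hc))

/-- Centralizers of `p`-subgroups of characteristic-`p` subgroups are characteristic `p`. -/
lemma ambCharP_centralizer_inf [Finite G] [Fact p.Prime] {K R : Subgroup G}
    (hK : AmbCharP p K) (hRK : R ≤ K) (hR : IsPGroup p R) :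
    AmbCharP p (Subgroup.centralizer (R : Set G) ⊓ K) := by
  have hp : p.Prime := Fact.out
  set T := ambCore p K with hT
  set C := Subgroup.centralizer (R : Set G) ⊓ K with hC
  have hCK : C ≤ K := inf_le_right
  have hCcen : C ≤ Subgroup.centralizer (R : Set G) := inf_le_left
  have hCconj : ∀ c ∈ C, cmap c C = C := by
    intro c hc
    rw [hC, cmap_inf, cmap_centralizer, cmap_of_mem_centralizer (hCcen hc), cmap_self_of_mem (hCK hc)]
  have hTc : ∀ c ∈ C, cmap c T = T := fun c hc => ambCore_cmap (cmap_self_of_mem (hCK hc))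
  -- T ⊓ centralizer R is contained in the core of C
  have hTC : T ⊓ Subgroup.centralizer (R : Set G) ≤ ambCore p C := by
    refine le_ambCore_of_cmap ?_ ((ambCore_isPGroup K).to_le inf_le_left) ?_
    · exact le_inf inf_le_right (inf_le_left.trans (ambCore_le K))
    · intro c hc
      rw [cmap_inf, hTc c hc, cmap_centralizer, cmap_of_mem_centralizer (hCcen hc)]
  -- the critical subgroup is a p-group
  set D := Subgroup.centralizer ((ambCore p C : Subgroup G) : Set G) ⊓ C with hD
  have hDp : IsPGroup p D := by
    rw [isPGroup_iff]
    intro g hg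
    obtain ⟨y, z, hgyz, hy, hz, ⟨k, hyk⟩, hzord⟩ := exists_pparts hp g
    have hzD : z ∈ D := (zpowers_le.mpr hg) hz
    have hz1 : z = 1 := by
      have hzC : z ∈ C := (Subgroup.mem_inf.mp hzD).2
      have hzT : z ∈ Subgroup.centralizer (T : Set G) := by
        refine abLemma (ambCore_isPGroup K) hR (hRK.trans (le_normalizer_ambCore K)) ?_ ?_ ?_ hzord
        · exact (le_normalizer_ambCore K) (hCK hzC)
        · exact hCcen hzC
        · have h1 : z ∈ Subgroup.centralizer ((ambCore p C : Subgroup G) : Set G) :=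
            inf_le_left (b := C) hzD
          exact isPGroup_centralizer_anti hTC h1
      have hzTK : z ∈ T := hK ⟨hzT, hCK hzC⟩
      obtain ⟨j, hj⟩ := isPGroup_iff.mp (ambCore_isPGroup K) z hzTK
      have hdvd : orderOf z ∣ p ^ j := orderOf_dvd_of_pow_eq_one hj
      have hcop : Nat.Coprime (orderOf z) (p ^ j) := hzord.pow_right j
      have h1 : orderOf z ∣ Nat.gcd (orderOf z) (p ^ j) := Nat.dvd_gcd dvd_rfl hdvd
      rw [Nat.Coprime] at hcop
      rw [hcop] at h1
      exact orderOf_eq_one_iff.mp (Nat.dvd_one.mp h1)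
    refine ⟨k, ?_⟩
    rw [hgyz, hz1, mul_one]
    exact hyk
  have hfin : D ≤ ambCore p C := by
    refine le_ambCore_of_cmap inf_le_right hDp ?_
    intro c hc
    rw [hD, cmap_inf, cmap_centralizer, ambCore_cmap (hCconj c hc), hCconj c hc]
  exact hfin

end CharPAux
namespace CharPAux

variable {p : ℕ} {G : Type*} [Group G]
open Subgroup

/-- Extending a characteristic-`p` subgroup by a normalizing `p`-subgroup. -/
lemma ambCharP_sup [Finite G] {H R : Subgroup G} (hH : AmbCharP p H)
    (hRn : R ≤ (Subgroup.normalizer (H : Set G))) (hR : IsPGroup p R) : AmbCharP p (H ⊔ R) := by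
  set K := H ⊔ R with hKdef
  have hTH : ambCore p H ≤ ambCore p K := by
    refine le_ambCore ((ambCore_le H).trans le_sup_left) (ambCore_isPGroup H) ?_
    refine sup_le (le_normalizer_ambCore H) ?_
    intro r hr
    exact mem_normalizer_of_cmap (ambCore_cmap (cmap_of_mem_normalizer (hRn hr)))
  set D := Subgroup.centralizer ((ambCore p K : Subgroup G) : Set G) ⊓ K with hD
  have hDp : IsPGroup p D := by
    rw [isPGroup_iff]
    intro g hg
    have hgK : g ∈ K := (Subgroup.mem_inf.mp hg).2
    obtain ⟨h, hh, r, hr, rfl⟩ := mem_sup_normalizer hRn hgK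
    obtain ⟨a, hra⟩ := isPGroup_iff.mp hR r hr
    obtain ⟨h', hh', he⟩ := pow_decomp_of_normalizer hh (hRn hr) (p ^ a)
    have hpow : (h * r) ^ p ^ a ∈ H := by
      rw [he, hra, mul_one]
      exact hh'
    have hpowD : (h * r) ^ p ^ a ∈ D := pow_mem hg (p ^ a)
    have hcent : (h * r) ^ p ^ a ∈
        Subgroup.centralizer ((ambCore p H : Subgroup G) : Set G) :=
      isPGroup_centralizer_anti hTH (Subgroup.mem_inf.mp hpowD).1
    have hcore : (h * r) ^ p ^ a ∈ ambCore p H := hH ⟨hcent, hpow⟩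
    obtain ⟨b, hb⟩ := isPGroup_iff.mp (ambCore_isPGroup H) _ hcore
    refine ⟨a + b, ?_⟩
    rw [pow_add, pow_mul]
    exact hb
  refine le_ambCore_of_cmap inf_le_right hDp ?_
  intro c hcK
  rw [cmap_inf, cmap_centralizer, ambCore_cmap (cmap_self_of_mem hcK),
    cmap_self_of_mem hcK]

/-- If the centralizer of a `p`-subgroup is of characteristic `p`, then so is
its normalizer. -/
lemma ambCharP_normalizer [Finite G] [Fact p.Prime] {R : Subgroup G} (hR : IsPGroup p R)
    (hC : AmbCharP p (Subgroup.centralizer (R : Set G))) : AmbCharP p (Subgroup.normalizer (R : Set G)) := by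
  have hp : p.Prime := Fact.out
  set N := (Subgroup.normalizer (R : Set G)) with hN
  set Cs := Subgroup.centralizer (R : Set G) with hCs
  have hRN : R ≤ ambCore p N := le_ambCore le_normalizer hR le_rfl
  have hCs_conj : ∀ c ∈ N, cmap c Cs = Cs := by
    intro c hc
    rw [hCs, cmap_centralizer, cmap_of_mem_normalizer hc]
  have hZC : ambCore p Cs ≤ ambCore p N := by
    refine le_ambCore ((ambCore_le Cs).trans (centralizer_le_normalizer' R))
      (ambCore_isPGroup Cs) ?_
    intro c hc
    exact mem_normalizer_of_cmap (ambCore_cmap (hCs_conj c hc))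
  set D := Subgroup.centralizer ((ambCore p N : Subgroup G) : Set G) ⊓ N with hD
  have hDp : IsPGroup p D := by
    rw [isPGroup_iff]
    intro g hg
    obtain ⟨y, z, hgyz, hy, hz, ⟨k, hyk⟩, hzord⟩ := exists_pparts hp g
    have hzD : z ∈ D := (zpowers_le.mpr hg) hz
    have hzcen : z ∈ Subgroup.centralizer ((ambCore p N : Subgroup G) : Set G) :=
      (Subgroup.mem_inf.mp hzD).1
    have hz1 : z = 1 := by
      have h1 : z ∈ Subgroup.centralizer ((ambCore p Cs : Subgroup G) : Set G) :=
        isPGroup_centralizer_anti hZC hzcen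
      have h2 : z ∈ Cs := isPGroup_centralizer_anti hRN hzcen
      have hzcore : z ∈ ambCore p Cs := hC ⟨h1, h2⟩
      obtain ⟨j, hj⟩ := isPGroup_iff.mp (ambCore_isPGroup Cs) z hzcore
      have hdvd : orderOf z ∣ p ^ j := orderOf_dvd_of_pow_eq_one hj
      have hcop : Nat.Coprime (orderOf z) (p ^ j) := hzord.pow_right j
      have h3 : orderOf z ∣ Nat.gcd (orderOf z) (p ^ j) := Nat.dvd_gcd dvd_rfl hdvd
      rw [Nat.Coprime] at hcop
      rw [hcop] at h3
      exact orderOf_eq_one_iff.mp (Nat.dvd_one.mp h3)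
    exact ⟨k, by rw [hgyz, hz1, mul_one]; exact hyk⟩
  refine le_ambCore_of_cmap inf_le_right hDp ?_
  intro c hcN
  have hNc : cmap c N = N := cmap_self_of_mem hcN
  rw [cmap_inf, cmap_centralizer, ambCore_cmap hNc, hNc]

/-- Conversely, if the normalizer is of characteristic `p`, so is the centralizer. -/
lemma ambCharP_centralizer_of_normalizer [Finite G] [Fact p.Prime] {R : Subgroup G}
    (hR : IsPGroup p R) (hN : AmbCharP p (Subgroup.normalizer (R : Set G))) :
    AmbCharP p (Subgroup.centralizer (R : Set G)) := by
  have h := ambCharP_centralizer_inf hN (le_normalizer) hR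
  rwa [inf_eq_left.mpr (centralizer_le_normalizer' R)] at h

/-- One step of the overgroup induction. -/
lemma ambCharP_step [Finite G] [Fact p.Prime] {P R : Subgroup G}
    (hP : AmbCharP p (Subgroup.centralizer (P : Set G))) (hPR : P ≤ R)
    (hRn : R ≤ (Subgroup.normalizer (P : Set G))) (hR : IsPGroup p R) :
    AmbCharP p (Subgroup.centralizer (R : Set G)) := by
  set H := Subgroup.centralizer (P : Set G) with hH
  have hRnH : R ≤ (Subgroup.normalizer (H : Set G)) := by
    intro r hr
    refine mem_normalizer_of_cmap ?_
    rw [hH, cmap_centralizer, cmap_of_mem_normalizer (hRn hr)]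
  have hKchar : AmbCharP p (H ⊔ R) := ambCharP_sup hP hRnH hR
  have hRle : R ≤ H ⊔ R := le_sup_right
  have h := ambCharP_centralizer_inf hKchar hRle hR
  have hle : Subgroup.centralizer (R : Set G) ≤ H ⊔ R :=
    (isPGroup_centralizer_anti hPR).trans le_sup_left
  rwa [inf_eq_left.mpr hle] at h

end CharPAux
namespace CharPAux

variable {p : ℕ} {G : Type*} [Group G]
open Subgroup

lemma card_lt_of_lt [Finite G] {A B : Subgroup G} (h : A < B) : Nat.card A < Nat.card B := by
  have h1 : (A : Set G) ⊂ (B : Set G) := SetLike.coe_ssubset_coe.mpr h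
  have h2 := Set.ncard_lt_ncard h1 (Set.toFinite _)
  simpa [← Nat.card_coe_set_eq] using h2

lemma exists_normalizing [Finite G] [Fact p.Prime] {P R : Subgroup G} (hPR : P ≤ R)
    (hne : P ≠ R) (hR : IsPGroup p R) : ∃ x, x ∈ R ∧ x ∈ (Subgroup.normalizer (P : Set G)) ∧ x ∉ P := by
  haveI : Group.IsNilpotent ↥R := hR.isNilpotent
  have hNC : NormalizerCondition ↥R := normalizerCondition_of_isNilpotent
  set P' := P.subgroupOf R with hP'
  have hP'top : P' < ⊤ := lt_top_iff_ne_top.mpr (by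
    intro htop
    rw [hP', subgroupOf_eq_top] at htop
    exact hne (le_antisymm hPR htop))
  have hlt := hNC P' hP'top
  obtain ⟨x, hx1, hx2⟩ := SetLike.exists_of_lt hlt
  refine ⟨(x : G), x.2, ?_, ?_⟩
  · rw [mem_normalizer_iff]
    intro h
    constructor
    · intro hh
      have hhR : h ∈ R := hPR hh
      have hm : (⟨h, hhR⟩ : R) ∈ P' := mem_subgroupOf.mpr hh
      have := (mem_normalizer_iff.mp hx1 ⟨h, hhR⟩).mp hm
      rw [mem_subgroupOf] at this
      simpa using this
    · intro hh
      have hR2 : (x:G) * h * (x:G)⁻¹ ∈ R := hPR hh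
      have hhR : h ∈ R := by
        have hmm := mul_mem (mul_mem (inv_mem x.2) hR2) x.2
        rwa [show (x:G)⁻¹ * ((x:G)*h*(x:G)⁻¹) * (x:G) = h by group] at hmm
      have hmem : x * ⟨h, hhR⟩ * x⁻¹ ∈ P' := by
        rw [mem_subgroupOf]
        simpa using hh
      have := (mem_normalizer_iff.mp hx1 ⟨h, hhR⟩).mpr hmem
      rw [mem_subgroupOf] at this
      exact this
  · intro hxP
    exact hx2 (by rw [hP', mem_subgroupOf]; exact hxP)

lemma ambCharP_chain [Finite G] [Fact p.Prime] {S : Subgroup G} (hS : IsPGroup p S) :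
    ∀ n : ℕ, ∀ P R : Subgroup G, P ≤ R → R ≤ S → Nat.card R ≤ Nat.card P + n →
      AmbCharP p (Subgroup.centralizer (P : Set G)) →
      AmbCharP p (Subgroup.centralizer (R : Set G)) := by
  intro n
  induction n with
  | zero =>
    intro P R hPR hRS hcard hP
    by_cases he : P = R
    · rw [← he]; exact hP
    · have := card_lt_of_lt (lt_of_le_of_ne hPR he)
      omega
  | succ n ih =>
    intro P R hPR hRS hcard hP
    by_cases he : P = R
    · rw [← he]; exact hP
    · obtain ⟨x, hxR, hxn, hxP⟩ := exists_normalizing hPR he (hS.to_le hRS)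
      set P₁ := (Subgroup.normalizer (P : Set G)) ⊓ R with hP₁
      have hPP₁ : P ≤ P₁ := le_inf le_normalizer hPR
      have hlt₁ : P < P₁ := lt_of_le_of_ne hPP₁ (by
        intro hEq
        exact hxP (hEq ▸ (Subgroup.mem_inf.mpr ⟨hxn, hxR⟩)))
      have hstep : AmbCharP p (Subgroup.centralizer (P₁ : Set G)) :=
        ambCharP_step hP hPP₁ inf_le_left (hS.to_le (inf_le_right.trans hRS))
      refine ih P₁ R inf_le_right hRS ?_ hstep
      have := card_lt_of_lt hlt₁
      omega

end CharPAux

/-- Let `G` be finite, `S ∈ Syl_p(G)`, and `P ≤ R ≤ S` with `C_G(P)` of characteristic `p`.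
Then `C_G(R)` is of characteristic `p`; consequently the set
`Δ = {P ≤ S : N_G(P) is of characteristic p}` is closed under passing to overgroups in `S`
and under `G`-conjugation. -/
theorem charP_centralizer_closed (p : ℕ) [Fact p.Prime] (G : Type*) [Group G] [Finite G]
    (S : Sylow p G) :
    (∀ P R : Subgroup G, P ≤ R → R ≤ S →
        IsCharP p (Subgroup.centralizer (P : Set G)) →
        IsCharP p (Subgroup.centralizer (R : Set G))) ∧
      (∀ P R : Subgroup G, P ≤ S → R ≤ S → P ≤ R →
        IsCharP p (Subgroup.normalizer (P : Set G)) → IsCharP p (Subgroup.normalizer (R : Set G))) ∧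
      (∀ P : Subgroup G, P ≤ S → IsCharP p (Subgroup.normalizer (P : Set G)) → ∀ g : G,
        Subgroup.map (MulAut.conj g).toMonoidHom P ≤ S →
        IsCharP p (Subgroup.normalizer ((Subgroup.map (MulAut.conj g).toMonoidHom P : Subgroup G) : Set G))) := by
  have hSp : IsPGroup p (S : Subgroup G) := S.isPGroup'
  refine ⟨?_, ?_, ?_⟩
  · intro P R hPR hRS hP
    rw [CharPAux.ambCharP_iff] at hP ⊢
    exact CharPAux.ambCharP_chain hSp (Nat.card R) P R hPR hRS (Nat.le_add_left _ _) hP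
  · intro P R hPS hRS hPR hP
    rw [CharPAux.ambCharP_iff] at hP ⊢
    have hPp := hSp.to_le hPS
    have hRp := hSp.to_le hRS
    have h1 := CharPAux.ambCharP_centralizer_of_normalizer hPp hP
    have h2 := CharPAux.ambCharP_chain hSp (Nat.card R) P R hPR hRS (Nat.le_add_left _ _) h1
    exact CharPAux.ambCharP_normalizer hRp h2
  · intro P hPS hP g hmap
    have e0 : Subgroup.normalizer ((Subgroup.map (MulAut.conj g).toMonoidHom P : Subgroup G) : Set G)
        = Subgroup.map (MulAut.conj g).toMonoidHom (Subgroup.normalizer (P : Set G)) :=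
      (CharPAux.cmap_normalizer g P).symm
    rw [e0]
    exact CharPAux.isCharP_of_mulEquiv
      (MulEquiv.subgroupMap (MulAut.conj g) (Subgroup.normalizer (P : Set G))) hP
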